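/- arXiv:1709.02407 — 2 statements merged into one kernel-verified Lean document; each statement's English description precedes it below -/
import Mathlib

section
/- Let α₀, β₀ ∈ ℂ with |α₀|² + |β₀|² = 1 and set A = (α₀, β₀) ∈ ℂ². For every real t, U_qs(t) · (A ⊗ (1,0) ⊗ (0,1)) = ψ(t) ⊗ (0,1), where ψ(t) ∈ ℂ⁴ is the two-qubit vector with components ψ(t)₀ = α₀, ψ(t)₁ = −i·sin(t)·β₀, ψ(t)₂ = cos(t)·β₀, ψ(t)₃ = 0, and the remaining tensor factor (0,1) sits on the third qubit. -/
open Matrix Complex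

/-- The Hamiltonian of the quantum qubit switch: the 8×8 complex matrix whose only
nonzero entries are `(H_qs)_{3,5} = (H_qs)_{5,3} = 1`. -/
noncomputable def Hqs : Matrix (Fin 8) (Fin 8) ℂ :=
  Matrix.of fun i j =>
    if (i = 3 ∧ j = 5) ∨ (i = 5 ∧ j = 3) then 1 else 0

/-- The time-evolution operator `U_qs(t) = exp(−i t H_qs)` (matrix exponential). -/
noncomputable def Uqs (t : ℝ) : Matrix (Fin 8) (Fin 8) ℂ :=
  NormedSpace.exp ((-(Complex.I * (t : ℂ))) • Hqs)

/-- Kronecker (tensor) product of three qubit vectors: the (4a+2b+c)-th component of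
`A ⊗ B ⊗ C` is `A_a · B_b · C_c`. -/
def tensor3 (A B C : Fin 2 → ℂ) : Fin 8 → ℂ := fun i =>
  A ⟨i.val / 4, by omega⟩ * B ⟨i.val / 2 % 2, by omega⟩ * C ⟨i.val % 2, by omega⟩

/-- Kronecker product of a two-qubit vector (ℂ⁴) with a qubit vector (ℂ²): the
(4a+2b+c)-th component of `ψ ⊗ C` is `ψ_{2a+b} · C_c`. -/
def tensor42 (ψ : Fin 4 → ℂ) (C : Fin 2 → ℂ) : Fin 8 → ℂ := fun i =>
  ψ ⟨i.val / 2, by omega⟩ * C ⟨i.val % 2, by omega⟩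

/-- A change-of-basis matrix diagonalizing `Hqs` (an unnormalized Hadamard on the
subspace spanned by the basis vectors 3 and 5, identity elsewhere). -/
def Qm : Matrix (Fin 8) (Fin 8) ℂ := Matrix.of fun i j =>
  if i = 3 ∧ j = 5 then 1 else if i = 5 ∧ j = 3 then 1
  else if i = 5 ∧ j = 5 then -1 else if i = j then 1 else 0

/-- The inverse of `Qm`. -/
noncomputable def Qm' : Matrix (Fin 8) (Fin 8) ℂ := Matrix.of fun i j =>
  if i = 3 ∧ j = 3 then 1/2 else if i = 3 ∧ j = 5 then 1/2
  else if i = 5 ∧ j = 3 then 1/2 else if i = 5 ∧ j = 5 then -(1/2)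
  else if i = j then 1 else 0

/-- Diagonal of `-(it)·Hqs` in the basis given by `Qm`. -/
noncomputable def vd (t : ℝ) : Fin 8 → ℂ :=
  fun i => if i = 3 then -(Complex.I * t) else if i = 5 then Complex.I * t else 0

lemma f8 : ((0:Fin 8):ℕ) = 0 ∧ ((1:Fin 8):ℕ) = 1 ∧ ((2:Fin 8):ℕ) = 2 ∧ ((3:Fin 8):ℕ) = 3
    ∧ ((4:Fin 8):ℕ) = 4 ∧ ((5:Fin 8):ℕ) = 5 ∧ ((6:Fin 8):ℕ) = 6 ∧ ((7:Fin 8):ℕ) = 7 :=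
  ⟨rfl, rfl, rfl, rfl, rfl, rfl, rfl, rfl⟩

set_option maxHeartbeats 1000000 in
lemma QQ' : Qm * Qm' = 1 := by
  ext i j
  fin_cases i <;> fin_cases j <;>
    norm_num +decide [Matrix.mul_apply, Fin.sum_univ_eight, Qm, Qm', Matrix.one_apply,
      f8.1, f8.2.1, f8.2.2.1, f8.2.2.2.1, f8.2.2.2.2.1, f8.2.2.2.2.2.1, f8.2.2.2.2.2.2]

set_option maxHeartbeats 1000000 in
lemma Q'Q : Qm' * Qm = 1 := by
  ext i j
  fin_cases i <;> fin_cases j <;>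
    norm_num +decide [Matrix.mul_apply, Fin.sum_univ_eight, Qm, Qm', Matrix.one_apply,
      f8.1, f8.2.1, f8.2.2.1, f8.2.2.2.1, f8.2.2.2.2.1, f8.2.2.2.2.2.1, f8.2.2.2.2.2.2]

set_option maxHeartbeats 1000000 in
lemma conj_eq (t : ℝ) :
    Qm * Matrix.diagonal (vd t) * Qm' = (-(Complex.I * (t : ℂ))) • Hqs := by
  ext i j
  fin_cases i <;> fin_cases j <;>
    norm_num +decide [Matrix.mul_apply, Fin.sum_univ_eight, Qm, Qm', vd, Hqs, Matrix.diagonal,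
      f8.1, f8.2.1, f8.2.2.1, f8.2.2.2.1, f8.2.2.2.2.1, f8.2.2.2.2.2.1,
      f8.2.2.2.2.2.2] <;> ring

/-- Explicit diagonalized form of the evolution operator. -/
lemma Uqs_eq (t : ℝ) :
    Uqs t = Qm * Matrix.diagonal (fun i => Complex.exp (vd t i)) * Qm' := by
  have hU : IsUnit Qm := ⟨⟨Qm, Qm', QQ', Q'Q⟩, rfl⟩
  have hinv : Qm⁻¹ = Qm' := inv_eq_left_inv Q'Q
  rw [Uqs, ← conj_eq, ← hinv, Matrix.exp_conj _ _ hU, Matrix.exp_diagonal, hinv]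
  congr 2
  funext i
  rw [Pi.exp_def]
  simp [← Complex.exp_eq_exp_ℂ]

set_option maxHeartbeats 1000000 in
/-- Acting on |A01⟩ (control qubit |1⟩), the switch at time t produces the two-qubit
state ψ(t) = (α₀, −i sin(t) β₀, cos(t) β₀, 0) on the first two qubits, tensored with
|1⟩ on the third qubit. -/
theorem switch_on_A01 (α₀ β₀ : ℂ) (hnorm : ‖α₀‖ ^ 2 + ‖β₀‖ ^ 2 = 1)
    (t : ℝ) :
    (Uqs t).mulVec (tensor3 ![α₀, β₀] ![1, 0] ![0, 1]) =
      tensor42 ![α₀, -Complex.I * (Real.sin t : ℂ) * β₀, (Real.cos t : ℂ) * β₀, 0]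
        ![0, 1] := by
  have h1 : Complex.exp (Complex.I * t) = (Real.cos t : ℂ) + (Real.sin t : ℂ) * Complex.I := by
    rw [mul_comm, Complex.exp_mul_I, ← Complex.ofReal_cos, ← Complex.ofReal_sin]
  have h2 : Complex.exp (-(Complex.I * t)) = (Real.cos t : ℂ) - (Real.sin t : ℂ) * Complex.I := by
    have h : -(Complex.I * (t:ℂ)) = ((-t : ℝ) : ℂ) * Complex.I := by push_cast; ring
    rw [h, Complex.exp_mul_I, ← Complex.ofReal_cos, ← Complex.ofReal_sin]
    push_cast
    simp [Complex.cos_neg, Complex.sin_neg]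
    ring
  have hv : tensor3 ![α₀, β₀] ![1, 0] ![0, 1] = ![0, α₀, 0, 0, 0, β₀, 0, 0] := by
    funext i; fin_cases i <;> simp [tensor3] <;> rfl
  have hw : tensor42 ![α₀, -Complex.I * (Real.sin t : ℂ) * β₀, (Real.cos t : ℂ) * β₀, 0]
      ![0, 1] = ![0, α₀, 0, -Complex.I * (Real.sin t : ℂ) * β₀, 0, (Real.cos t : ℂ) * β₀, 0, 0] := by
    funext i; fin_cases i <;> simp [tensor42] <;> rfl
  have hb5 : ![(0:ℂ), α₀, 0, 0, 0, β₀, 0, 0] 5 = β₀ := rfl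
  have hb1 : ![(0:ℂ), α₀, 0, 0, 0, β₀, 0, 0] 1 = α₀ := rfl
  have hb3 : ![(0:ℂ), α₀, 0, 0, 0, β₀, 0, 0] 3 = 0 := rfl
  rw [Uqs_eq, hv, hw]
  funext i
  fin_cases i <;>
    norm_num +decide [Matrix.mulVec, Matrix.mul_apply, dotProduct, Fin.sum_univ_eight,
      Qm, Qm', vd, Matrix.diagonal, h1, h2,
      f8.1, f8.2.1, f8.2.2.1, f8.2.2.2.1, f8.2.2.2.2.1, f8.2.2.2.2.2.1, f8.2.2.2.2.2.2, hb5, hb1, hb3] <;>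
    (try rfl) <;> (try ring) <;> tauto
end

section
/- Let α₀, β₀ ∈ ℂ with |α₀|² + |β₀|² = 1, t ∈ ℝ, p ∈ [0,1], and let ρ'_A := p·ρ_A(t) + (1−p)·σ_z ρ_A(t) σ_z be the result of the Phase Flip channel acting on ρ_A(t). Then 2(1 − tr(ρ'_A²)) = 2 − 4(1−2p)²·|α₀|²·cos²(t)·|β₀|² − 2(|α₀|² + sin²(t)|β₀|²)² − 2cos⁴(t)|β₀|⁴; i.e. the squared I-Concurrence of the switch state under Phase Flip noise on the first qubit equals this expression. -/
open Matrix Complex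

/-- The two-qubit state of the switch at time t:
ψ(t) = (α₀, −i sin(t) β₀, cos(t) β₀, 0). -/
noncomputable def ψ (α₀ β₀ : ℂ) (t : ℝ) : Fin 4 → ℂ :=
  ![α₀, -Complex.I * (Real.sin t : ℂ) * β₀, (Real.cos t : ℂ) * β₀, 0]

/-- The density matrix ρ(t) = ψ(t)ψ(t)†. -/
noncomputable def ρ (α₀ β₀ : ℂ) (t : ℝ) : Matrix (Fin 4) (Fin 4) ℂ :=
  vecMulVec (ψ α₀ β₀ t) (star (ψ α₀ β₀ t))

/-- The reduced density matrix on the first qubit (partial trace over the second):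
`(ρ_A)_{i,j} = Σ_k ρ_{2i+k, 2j+k}`. -/
noncomputable def ρA (α₀ β₀ : ℂ) (t : ℝ) : Matrix (Fin 2) (Fin 2) ℂ :=
  Matrix.of fun i j => ∑ k : Fin 2,
    ρ α₀ β₀ t ⟨2 * i.val + k.val, by omega⟩ ⟨2 * j.val + k.val, by omega⟩

/-- The Pauli Z matrix. -/
def σz : Matrix (Fin 2) (Fin 2) ℂ := !![1, 0; 0, -1]


lemma ρA_eq (α₀ β₀ : ℂ) (t : ℝ) : ρA α₀ β₀ t =
    !![α₀ * starRingEnd ℂ α₀ + (Real.sin t : ℂ)^2 * (β₀ * starRingEnd ℂ β₀),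
       (Real.cos t : ℂ) * (α₀ * starRingEnd ℂ β₀);
       (Real.cos t : ℂ) * (starRingEnd ℂ α₀ * β₀),
       (Real.cos t : ℂ)^2 * (β₀ * starRingEnd ℂ β₀)] := by
  ext i j
  fin_cases i <;> fin_cases j <;>
    simp [ρA, ρ, ψ, vecMulVec_apply, Fin.sum_univ_succ, Fin.isValue,
      show ((⟨0, by omega⟩ : Fin 4)) = 0 from rfl,
      show ((⟨1, by omega⟩ : Fin 4)) = 1 from rfl,
      show ((⟨2, by omega⟩ : Fin 4)) = 2 from rfl,
      show ((⟨3, by omega⟩ : Fin 4)) = 3 from rfl, -Complex.ofReal_sin, -Complex.ofReal_cos,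
      Complex.conj_ofReal]
  all_goals ring_nf
  all_goals (try rw [Complex.I_sq])
  all_goals ring

set_option maxHeartbeats 1000000 in
/-- Squared I-Concurrence of the switch state under Phase Flip noise on the first
qubit: with ρ'_A = p·ρ_A + (1−p)·σ_z ρ_A σ_z, one has
2(1 − tr(ρ'_A²)) = 2 − 4(1−2p)²|α₀|²cos²(t)|β₀|² − 2(|α₀|² + sin²(t)|β₀|²)²
− 2cos⁴(t)|β₀|⁴. -/
theorem iconcurrence_sq_phase_flip (α₀ β₀ : ℂ) (t : ℝ) (p : ℝ)
    (hnorm : ‖α₀‖ ^ 2 + ‖β₀‖ ^ 2 = 1)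
    (hp₀ : 0 ≤ p) (hp₁ : p ≤ 1) :
    (2 : ℂ) * (1 -
      (((p : ℂ) • ρA α₀ β₀ t + ((1 - p : ℝ) : ℂ) • (σz * ρA α₀ β₀ t * σz)) *
       ((p : ℂ) • ρA α₀ β₀ t + ((1 - p : ℝ) : ℂ) • (σz * ρA α₀ β₀ t * σz))).trace) =
    ((2 - 4 * (1 - 2 * p) ^ 2 * ‖α₀‖ ^ 2 * Real.cos t ^ 2 * ‖β₀‖ ^ 2
        - 2 * (‖α₀‖ ^ 2 + Real.sin t ^ 2 * ‖β₀‖ ^ 2) ^ 2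
        - 2 * Real.cos t ^ 4 * ‖β₀‖ ^ 4 : ℝ) : ℂ) := by
  have h1 : ((‖α₀‖ ^ 2 : ℝ) : ℂ) = α₀ * starRingEnd ℂ α₀ := by
    rw [Complex.mul_conj]; norm_cast; rw [Complex.sq_norm]
  have h2 : ((‖β₀‖ ^ 2 : ℝ) : ℂ) = β₀ * starRingEnd ℂ β₀ := by
    rw [Complex.mul_conj]; norm_cast; rw [Complex.sq_norm]
  have h4 : ((‖β₀‖ ^ 4 : ℝ) : ℂ) = (β₀ * starRingEnd ℂ β₀) ^ 2 := by
    rw [show (‖β₀‖ ^ 4 : ℝ) = (‖β₀‖ ^ 2) ^ 2 by ring]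
    push_cast [h2]; ring
  rw [ρA_eq, σz]
  simp only [Matrix.trace, Matrix.diag, Matrix.mul_apply, Matrix.add_apply,
    Matrix.smul_apply, Fin.sum_univ_succ, Finset.sum_empty, Fin.sum_univ_zero,
    smul_eq_mul, Matrix.cons_val', Matrix.cons_val_zero, Matrix.cons_val_one,
    Matrix.head_cons, Matrix.empty_val', Matrix.cons_val_fin_one, Matrix.head_fin_const,
    Matrix.of_apply, Matrix.cons_val_succ, Fin.succ_zero_eq_one, Fin.isValue]
  push_cast [h1, h2, h4]
  ring
end
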